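/- Let C be a Krull-Schmidt extriangulated category with enough projectives and injectives. If X ⊆ C is a covariantly finite subcategory closed under extensions and direct summands, then Y = {A ∈ C : E(A, X) = 0 for all X ∈ X} is a contravariantly finite subcategory closed under extensions and direct summands. -/

import Mathlib

open CategoryTheory Opposite Limits

universe v u

namespace ExtTilting

variable (C : Type u) [Category.{v} C] [Preadditive C] [HasFiniteBiproducts C] [HasBinaryBiproducts C]

/-- A Krull-Schmidt category: every object is a finite biproduct of objects
with local endomorphism rings. -/
def IsKrullSchmidt : Prop :=
  ∀ X : C, ∃ (n : ℕ) (f : Fin n → C),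
    (∀ i, IsLocalRing (End (f i))) ∧ Nonempty (X ≅ ⨁ f)

/-- An extriangulated category structure (Nakaoka–Palu) on an additive category `C`:
a biadditive functor `E : Cᵒᵖ × C ⥤ Ab` together with a realization of each
`E`-extension `δ ∈ E(X, A)` by conflations `A ⟶ B ⟶ X`, satisfying (ET1)–(ET4)
and their duals.  `IsConf f g δ` means that the sequence `A ⟶ B ⟶ X` given by
`f, g` realizes the extension `δ`. -/
structure ExtCat where
  /-- the biadditive functor `E : Cᵒᵖ × C ⥤ Ab`; `E(X, A) = (E.obj (op X)).obj A` -/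
  E : Cᵒᵖ ⥤ C ⥤ AddCommGrpCat.{v}
  E_additive_right : ∀ X : Cᵒᵖ, (E.obj X).Additive
  E_additive_left : ∀ A : C, (E.flip.obj A).Additive
  /-- `IsConf f g δ`: the sequence `A ⟶ B ⟶ X` realizes `δ ∈ E(X, A)` -/
  IsConf : ∀ {A B X : C}, (A ⟶ B) → (B ⟶ X) → ((E.obj (op X)).obj A) → Prop
  /-- every extension is realized by some conflation -/
  real_exists : ∀ {A X : C} (δ : (E.obj (op X)).obj A),
    ∃ (B : C) (f : A ⟶ B) (g : B ⟶ X), IsConf f g δ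
  /-- any two realizations of the same extension are equivalent -/
  real_unique : ∀ {A B B' X : C} {f : A ⟶ B} {g : B ⟶ X} {f' : A ⟶ B'} {g' : B' ⟶ X}
      {δ : (E.obj (op X)).obj A}, IsConf f g δ → IsConf f' g' δ →
      ∃ b : B ≅ B', f ≫ b.hom = f' ∧ b.hom ≫ g' = g
  /-- the zero extension is realized by the split sequence -/
  real_zero : ∀ A X : C,
    IsConf (biprod.inl : A ⟶ A ⊞ X) (biprod.snd : A ⊞ X ⟶ X) (0 : (E.obj (op X)).obj A)
  /-- realization of morphisms of extensions -/
  real_map : ∀ {A B X A' B' X' : C} {f : A ⟶ B} {g : B ⟶ X} {f' : A' ⟶ B'} {g' : B' ⟶ X'}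
      {δ : (E.obj (op X)).obj A} {δ' : (E.obj (op X')).obj A'}
      (a : A ⟶ A') (c : X ⟶ X'),
      IsConf f g δ → IsConf f' g' δ' →
      (E.obj (op X)).map a δ = (E.map c.op).app A' δ' →
      ∃ b : B ⟶ B', f ≫ b = a ≫ f' ∧ b ≫ g' = g ≫ c
  /-- (ET3) -/
  et3 : ∀ {A B X A' B' X' : C} {f : A ⟶ B} {g : B ⟶ X} {f' : A' ⟶ B'} {g' : B' ⟶ X'}
      {δ : (E.obj (op X)).obj A} {δ' : (E.obj (op X')).obj A'}
      (a : A ⟶ A') (b : B ⟶ B'),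
      IsConf f g δ → IsConf f' g' δ' → f ≫ b = a ≫ f' →
      ∃ c : X ⟶ X', g ≫ c = b ≫ g' ∧
        (E.obj (op X)).map a δ = (E.map c.op).app A' δ'
  /-- (ET3ᵒᵖ) -/
  et3op : ∀ {A B X A' B' X' : C} {f : A ⟶ B} {g : B ⟶ X} {f' : A' ⟶ B'} {g' : B' ⟶ X'}
      {δ : (E.obj (op X)).obj A} {δ' : (E.obj (op X')).obj A'}
      (b : B ⟶ B') (c : X ⟶ X'),
      IsConf f g δ → IsConf f' g' δ' → g ≫ c = b ≫ g' →
      ∃ a : A ⟶ A', f ≫ b = a ≫ f' ∧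
        (E.obj (op X)).map a δ = (E.map c.op).app A' δ'
  /-- (ET4) -/
  et4 : ∀ {A B D F : C} {Cc : C} {f : A ⟶ B} {f' : B ⟶ D} {g : B ⟶ Cc} {g' : Cc ⟶ F}
      {δ : (E.obj (op D)).obj A} {δ' : (E.obj (op F)).obj B},
      IsConf f f' δ → IsConf g g' δ' →
      ∃ (Ee : C) (d : D ⟶ Ee) (e : Ee ⟶ F) (h' : Cc ⟶ Ee)
        (δ'' : (E.obj (op Ee)).obj A),
        IsConf (f ≫ g) h' δ'' ∧
        IsConf d e ((E.obj (op F)).map f' δ') ∧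
        g ≫ h' = f' ≫ d ∧ h' ≫ e = g' ∧
        (E.map d.op).app A δ'' = δ ∧
        (E.obj (op Ee)).map f δ'' = (E.map e.op).app B δ'
  /-- (ET4ᵒᵖ) -/
  et4op : ∀ {D A B F : C} {Cc : C} {f' : D ⟶ A} {f : A ⟶ B} {g' : F ⟶ B} {g : B ⟶ Cc}
      {δ : (E.obj (op B)).obj D} {δ' : (E.obj (op Cc)).obj F},
      IsConf f' f δ → IsConf g' g δ' →
      ∃ (Ee : C) (d : D ⟶ Ee) (e : Ee ⟶ F) (h' : Ee ⟶ A)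
        (δ'' : (E.obj (op Cc)).obj Ee),
        IsConf h' (f ≫ g) δ'' ∧
        IsConf d e ((E.map g'.op).app D δ) ∧
        d ≫ h' = f' ∧ e ≫ g' = h' ≫ f ∧
        (E.obj (op Cc)).map e δ'' = δ' ∧
        (E.obj (op B)).map d δ = (E.map g.op).app Ee δ''

/-- An extriangulated category with enough projectives and enough injectives,
together with chosen syzygies `Ω` and cosyzygies `Susp` (used to define the
higher extension groups `E^{i+1}(X, A) = E(X, Suspᶦ A)`). -/
structure ECat extends ExtCat C where
  /-- chosen projective cover object -/
  P : C → C
  /-- chosen syzygy -/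
  Ω : C → C
  ιP : ∀ X : C, Ω X ⟶ P X
  πP : ∀ X : C, P X ⟶ X
  δP : ∀ X : C, (E.obj (op X)).obj (Ω X)
  confP : ∀ X : C, IsConf (ιP X) (πP X) (δP X)
  P_projective : ∀ (X A : C) (δ : (E.obj (op (P X))).obj A), δ = 0
  /-- chosen injective hull object -/
  I : C → C
  /-- chosen cosyzygy -/
  Susp : C → C
  ιI : ∀ A : C, A ⟶ I A
  πI : ∀ A : C, I A ⟶ Susp A
  δI : ∀ A : C, (E.obj (op (Susp A))).obj A
  confI : ∀ A : C, IsConf (ιI A) (πI A) (δI A)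
  I_injective : ∀ (A X : C) (δ : (E.obj (op X)).obj (I A)), δ = 0

namespace ECat

variable {C} (𝒞 : ECat C)

/-- The group `E(X, A)` of `E`-extensions. -/
def Eext (X A : C) : AddCommGrpCat.{v} := (𝒞.E.obj (op X)).obj A

/-- `Tri A B X` : there is an `E`-triangle `A ⟶ B ⟶ X`. -/
def Tri (A B X : C) : Prop :=
  ∃ (f : A ⟶ B) (g : B ⟶ X) (δ : 𝒞.Eext X A), 𝒞.IsConf f g δ

/-- projective objects: `E(P, A) = 0` for all `A` -/
def Projective (P : C) : Prop := ∀ (A : C) (δ : 𝒞.Eext P A), δ = 0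

/-- injective objects: `E(X, I) = 0` for all `X` -/
def Injective (I : C) : Prop := ∀ (X : C) (δ : 𝒞.Eext X I), δ = 0

/-- `extVanish i X A` says that the higher extension group
`E^{i+1}(X, A) = E(X, Suspᶦ A)` vanishes. -/
def extVanish (i : ℕ) (X A : C) : Prop := ∀ δ : 𝒞.Eext X (𝒞.Susp^[i] A), δ = 0

/-- `S^⊥ = {Y | E^i(T, Y) = 0 for all i ≥ 1, T ∈ S}` -/
def rperp (S : Set C) : Set C := {Y | ∀ T ∈ S, ∀ i : ℕ, 𝒞.extVanish i T Y}

/-- `^⊥S = {Y | E^i(Y, T) = 0 for all i ≥ 1, T ∈ S}` -/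
def lperp (S : Set C) : Set C := {Y | ∀ T ∈ S, ∀ i : ℕ, 𝒞.extVanish i Y T}

/-- `S^{⊥₁} = {Y | E(T, Y) = 0 for all T ∈ S}` -/
def rperp1 (S : Set C) : Set C := {Y | ∀ T ∈ S, ∀ δ : 𝒞.Eext T Y, δ = 0}

/-- `^{⊥₁}S = {Y | E(Y, T) = 0 for all T ∈ S}` -/
def lperp1 (S : Set C) : Set C := {Y | ∀ T ∈ S, ∀ δ : 𝒞.Eext Y T, δ = 0}

/-- self-orthogonal subcategory: `E^i(T₁, T₂) = 0` for all `i ≥ 1`, `T₁, T₂ ∈ S` -/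
def SelfOrth (S : Set C) : Prop := ∀ T₁ ∈ S, ∀ T₂ ∈ S, ∀ i : ℕ, 𝒞.extVanish i T₁ T₂

/-- `Resol S n A' A` : there is an `E`-triangle sequence
`A' → S_n → ⋯ → S_1 → A` with all `S_i ∈ S`. -/
def Resol (S : Set C) : ℕ → C → C → Prop
  | 0, A', A => A' = A
  | n + 1, A', A => ∃ T K, T ∈ S ∧ 𝒞.Tri K T A ∧ Resol S n A' K

/-- `Coresol S n A A'` : there is an `E`-triangle sequence
`A → S_1 → ⋯ → S_n → A'` with all `S_i ∈ S`. -/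
def Coresol (S : Set C) : ℕ → C → C → Prop
  | 0, A, A' => A = A'
  | n + 1, A, A' => ∃ T K, T ∈ S ∧ 𝒞.Tri A T K ∧ Coresol S n K A'

/-- `Pres S n` : objects `A` admitting an `E`-triangle sequence
`A' → S_n → ⋯ → S_1 → A` with all `S_i ∈ S`. -/
def Pres (S : Set C) (n : ℕ) : Set C := {A | ∃ A', Resol 𝒞 S n A' A}

/-- `Copres S n` : objects `A` admitting an `E`-triangle sequence
`A → S_1 → ⋯ → S_n → A'` with all `S_i ∈ S`. -/
def Copres (S : Set C) (n : ℕ) : Set C := {A | ∃ A', Coresol 𝒞 S n A A'}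

/-- `Š_n` : objects admitting a finite `S`-coresolution `A → S_0 → ⋯ → S_n`. -/
def CheckN (S : Set C) : ℕ → Set C
  | 0 => S
  | n + 1 => {A | ∃ T K, T ∈ S ∧ 𝒞.Tri A T K ∧ K ∈ CheckN S n}

/-- `Ŝ_n` : objects admitting a finite `S`-resolution `S_n → ⋯ → S_0 → A`. -/
def HatN (S : Set C) : ℕ → Set C
  | 0 => S
  | n + 1 => {A | ∃ T K, T ∈ S ∧ 𝒞.Tri K T A ∧ K ∈ HatN S n}

/-- `Š = ⋃ₙ Š_n` -/
def Check (S : Set C) : Set C := ⋃ n : ℕ, CheckN 𝒞 S n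

/-- `Ŝ = ⋃ₙ Ŝ_n` -/
def Hat (S : Set C) : Set C := ⋃ n : ℕ, HatN 𝒞 S n

/-- projective dimension at most `n` : there is a projective resolution of length `n` -/
def projDimLE (A : C) (n : ℕ) : Prop := A ∈ HatN 𝒞 {P | 𝒞.Projective P} n

/-- injective dimension at most `n` -/
def injDimLE (A : C) (n : ℕ) : Prop := A ∈ CheckN 𝒞 {I | 𝒞.Injective I} n

/-- `S` is a generator for `Y` : `S ⊆ Y` and every `A ∈ Y` admits an
`E`-triangle `A' → T → A` with `T ∈ S`, `A' ∈ Y`. -/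
def GeneratorFor (S Y : Set C) : Prop :=
  S ⊆ Y ∧ ∀ A ∈ Y, ∃ A' T, T ∈ S ∧ A' ∈ Y ∧ 𝒞.Tri A' T A

/-- `S` is a cogenerator for `Y` : `S ⊆ Y` and every `A ∈ Y` admits an
`E`-triangle `A → T → A'` with `T ∈ S`, `A' ∈ Y`. -/
def CogeneratorFor (S Y : Set C) : Prop :=
  S ⊆ Y ∧ ∀ A ∈ Y, ∃ A' T, T ∈ S ∧ A' ∈ Y ∧ 𝒞.Tri A T A'

/-- `_S X` : objects `A` admitting an `E`-triangle sequence
`⋯ → T₁ → T₀ → A` with all `Tᵢ ∈ S` and all cocones in `S^⊥`. -/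
def genSub (S : Set C) : Set C :=
  {A | ∃ K T : ℕ → C, (∀ n, T n ∈ S) ∧ (∀ n, K n ∈ 𝒞.rperp S) ∧
    𝒞.Tri (K 0) (T 0) A ∧ ∀ n, 𝒞.Tri (K (n + 1)) (T (n + 1)) (K n)}

/-- `X_S` : objects `A` admitting an `E`-triangle sequence
`A → T₀ → T₁ → ⋯` with all `Tᵢ ∈ S` and all cones in `^⊥S`. -/
def cogenSub (S : Set C) : Set C :=
  {A | ∃ K T : ℕ → C, (∀ n, T n ∈ S) ∧ (∀ n, K n ∈ 𝒞.lperp S) ∧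
    𝒞.Tri A (T 0) (K 0) ∧ ∀ n, 𝒞.Tri (K n) (T (n + 1)) (K (n + 1))}

/-- closed under extensions -/
def ClosedExt (S : Set C) : Prop :=
  ∀ A B X : C, 𝒞.Tri A B X → A ∈ S → X ∈ S → B ∈ S

/-- closed under cones of inflations (resp. of deflations) -/
def ClosedCone (S : Set C) : Prop :=
  ∀ A B X : C, 𝒞.Tri A B X → A ∈ S → B ∈ S → X ∈ S

/-- closed under cocones of deflations -/
def ClosedCocone (S : Set C) : Prop :=
  ∀ A B X : C, 𝒞.Tri A B X → B ∈ S → X ∈ S → A ∈ S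

/-- closed under direct summands -/
def ClosedSummands (S : Set C) : Prop :=
  ∀ A B : C, (A ⊞ B) ∈ S → A ∈ S ∧ B ∈ S

/-- closed under isomorphisms -/
def ClosedIso (S : Set C) : Prop := ∀ A B : C, (A ≅ B) → A ∈ S → B ∈ S

/-- coresolving : contains the injectives, closed under extensions and
cones of deflations -/
def Coresolving (S : Set C) : Prop :=
  (∀ I : C, 𝒞.Injective I → I ∈ S) ∧ 𝒞.ClosedExt S ∧ 𝒞.ClosedCone S

/-- resolving : contains the projectives, closed under extensions and
cocones of inflations -/
def Resolving (S : Set C) : Prop :=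
  (∀ P : C, 𝒞.Projective P → P ∈ S) ∧ 𝒞.ClosedExt S ∧ 𝒞.ClosedCocone S

/-- `g : T ⟶ A` is a right `S`-approximation of `A` -/
def IsRightApprox (S : Set C) {T A : C} (g : T ⟶ A) : Prop :=
  T ∈ S ∧ ∀ T' ∈ S, ∀ h : T' ⟶ A, ∃ k : T' ⟶ T, k ≫ g = h

/-- `g : A ⟶ T` is a left `S`-approximation of `A` -/
def IsLeftApprox (S : Set C) {A T : C} (g : A ⟶ T) : Prop :=
  T ∈ S ∧ ∀ T' ∈ S, ∀ h : A ⟶ T', ∃ k : T ⟶ T', g ≫ k = h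

/-- contravariantly finite : every object has a right `S`-approximation -/
def ContravariantlyFinite (S : Set C) : Prop :=
  ∀ A : C, ∃ (T : C) (g : T ⟶ A), IsRightApprox S g

/-- covariantly finite : every object has a left `S`-approximation -/
def CovariantlyFinite (S : Set C) : Prop :=
  ∀ A : C, ∃ (T : C) (g : A ⟶ T), IsLeftApprox S g

/-- tilting subcategory of projective dimension `n` -/
def IsTilting (S : Set C) (n : ℕ) : Prop :=
  ClosedSummands S ∧ (∀ T ∈ S, 𝒞.projDimLE T n) ∧ 𝒞.GeneratorFor S (𝒞.rperp S)

/-- cotilting subcategory of injective dimension `n` -/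
def IsCotilting (S : Set C) (n : ℕ) : Prop :=
  ClosedSummands S ∧ (∀ T ∈ S, 𝒞.injDimLE T n) ∧ 𝒞.CogeneratorFor S (𝒞.lperp S)

end ECat

end ExtTilting

namespace ExtTilting
open ECat
variable {C : Type u} [Category.{v} C] [Preadditive C]
  [HasFiniteBiproducts C] [HasBinaryBiproducts C]

set_option linter.unusedSectionVars false
set_option maxHeartbeats 1000000

section EndRing

/-- view an endomorphism as an element of the endomorphism ring -/
def toEnd {X : C} (f : X ⟶ X) : End X := f

lemma toEnd_mul {X : C} (f g : X ⟶ X) : toEnd f * toEnd g = toEnd (g ≫ f) := rfl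

lemma isIso_of_isUnit {X : C} (φ : End X) (h : IsUnit φ) : IsIso (φ : X ⟶ X) := by
  obtain ⟨u, rfl⟩ := h
  exact ⟨u.inv, u.inv_val, u.val_inv⟩

lemma local_one_sub {X : C} [IsLocalRing (End X)] (a : End X) (h : ¬ IsUnit a) :
    IsUnit ((1 : End X) - a) := by
  rcases IsLocalRing.isUnit_or_isUnit_of_add_one (a := a) (b := 1 - a)
    (by rw [add_sub_cancel]) with h'|h'
  · exact absurd h' h
  · exact h'

lemma local_nonunits_add {X : C} [IsLocalRing (End X)] (a b : End X) (ha : ¬ IsUnit a)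
    (hb : ¬ IsUnit b) : ¬ IsUnit (a + b) := by
  intro ⟨u, hu⟩
  rcases IsLocalRing.isUnit_or_isUnit_of_add_one
    (a := (↑u⁻¹ : End X) * a) (b := (↑u⁻¹ : End X) * b)
    (by rw [← mul_add, ← hu, Units.inv_mul]) with h'|h'
  · refine ha ?_
    have := u.isUnit.mul h'
    rwa [← mul_assoc, Units.mul_inv, one_mul] at this
  · refine hb ?_
    have := u.isUnit.mul h'
    rwa [← mul_assoc, Units.mul_inv, one_mul] at this

lemma isIso_of_splitMono {X Y : C} [IsLocalRing (End X)] [IsLocalRing (End Y)]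
    (p : X ⟶ Y) (r : Y ⟶ X) (hpr : p ≫ r = 𝟙 X) : IsIso p := by
  have he : toEnd (r ≫ p) * toEnd (r ≫ p) = toEnd (r ≫ p) := by
    rw [toEnd_mul]
    congr 1
    rw [Category.assoc, ← Category.assoc p r p, hpr, Category.id_comp]
  by_cases hu : IsUnit (toEnd (r ≫ p))
  · obtain ⟨v, hv⟩ := hu.exists_left_inv
    have h1 : toEnd (r ≫ p) = 1 := by
      calc toEnd (r ≫ p) = (v * toEnd (r ≫ p)) * toEnd (r ≫ p) := by rw [hv, one_mul]
        _ = v * (toEnd (r ≫ p) * toEnd (r ≫ p)) := mul_assoc _ _ _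
        _ = v * toEnd (r ≫ p) := by rw [he]
        _ = 1 := hv
    exact ⟨r, hpr, h1⟩
  · exfalso
    have h10 : IsUnit ((1 : End Y) - toEnd (r ≫ p)) := local_one_sub _ hu
    obtain ⟨v, hv⟩ := h10.exists_left_inv
    have h0 : toEnd (r ≫ p) = 0 := by
      have hz : ((1 : End Y) - toEnd (r ≫ p)) * toEnd (r ≫ p) = 0 := by
        rw [sub_mul, one_mul, he, sub_self]
      calc toEnd (r ≫ p) = (v * ((1 : End Y) - toEnd (r ≫ p))) * toEnd (r ≫ p) := by
            rw [hv, one_mul]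
        _ = v * (((1 : End Y) - toEnd (r ≫ p)) * toEnd (r ≫ p)) := mul_assoc _ _ _
        _ = 0 := by rw [hz, mul_zero]
    have hrp : (r ≫ p : Y ⟶ Y) = 0 := h0
    have hp0 : p = 0 := by
      have h2 : p ≫ (r ≫ p) = p := by rw [← Category.assoc, hpr, Category.id_comp]
      rw [hrp, comp_zero] at h2
      exact h2.symm
    have h3 : (𝟙 X : X ⟶ X) = 0 := by rw [← hpr, hp0, zero_comp]
    exact one_ne_zero (α := End X) h3

lemma notIso_comp_left {X Y W : C} [IsLocalRing (End X)] [IsLocalRing (End Y)]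
    (p : X ⟶ Y) (hp : ¬ IsIso p) (r : Y ⟶ W) : ¬ IsIso (p ≫ r) := by
  intro h
  exact hp (isIso_of_splitMono p (r ≫ CategoryTheory.inv (p ≫ r)) (by
    rw [← Category.assoc, IsIso.hom_inv_id]))

lemma notIso_neg {X Y : C} (p : X ⟶ Y) (hp : ¬ IsIso p) : ¬ IsIso (-p) := by
  intro h
  refine hp ⟨-(CategoryTheory.inv (-p)), ?_, ?_⟩
  · rw [Preadditive.comp_neg, ← Preadditive.neg_comp, IsIso.hom_inv_id]
  · rw [Preadditive.neg_comp, ← Preadditive.comp_neg, IsIso.inv_hom_id]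

lemma notIso_add {X Y : C} [IsLocalRing (End X)] [IsLocalRing (End Y)]
    (p q : X ⟶ Y) (hp : ¬ IsIso p) (hq : ¬ IsIso q) : ¬ IsIso (p + q) := by
  intro h
  have hkey : ∀ z : X ⟶ Y, ¬ IsIso z → ¬ IsUnit (toEnd (z ≫ CategoryTheory.inv (p + q))) := by
    intro z hz hu
    have : IsIso ((z ≫ CategoryTheory.inv (p + q) : X ⟶ X)) := isIso_of_isUnit _ hu
    exact hz (isIso_of_splitMono z
      (CategoryTheory.inv (p + q) ≫ CategoryTheory.inv (z ≫ CategoryTheory.inv (p + q)))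
      (by rw [← Category.assoc, IsIso.hom_inv_id]))
  have hsum : toEnd (p ≫ CategoryTheory.inv (p + q)) + toEnd (q ≫ CategoryTheory.inv (p + q))
      = (1 : End X) := by
    show p ≫ CategoryTheory.inv (p + q) + q ≫ CategoryTheory.inv (p + q) = 𝟙 X
    rw [← Preadditive.add_comp, IsIso.hom_inv_id]
  exact local_nonunits_add _ _ (hkey p hp) (hkey q hq) (hsum ▸ isUnit_one)

end EndRing

section Matrix

lemma elim2 {XX GG FF : C} (pi0 : FF ⟶ XX) (io : XX ⟶ FF) (P : FF ⟶ GG) (J : GG ⟶ FF)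
    (h1 : io ≫ pi0 = 𝟙 XX) (h2 : io ≫ P = 0) (h3 : J ≫ pi0 = 0) (h4 : J ≫ P = 𝟙 GG)
    (h5 : pi0 ≫ io + P ≫ J = 𝟙 FF)
    (u : XX ⟶ XX) (b1 : XX ⟶ GG) (c1 : GG ⟶ XX) (Dm : GG ⟶ GG)
    [IsIso u] (hS : IsIso (Dm - c1 ≫ inv u ≫ b1)) :
    IsIso (pi0 ≫ u ≫ io + pi0 ≫ b1 ≫ J + P ≫ c1 ≫ io + P ≫ Dm ≫ J) := by
  have h1' : ∀ {Z : C} (k : XX ⟶ Z), io ≫ pi0 ≫ k = k := by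
    intro Z k; rw [← Category.assoc, h1, Category.id_comp]
  have h2' : ∀ {Z : C} (k : GG ⟶ Z), io ≫ P ≫ k = 0 := by
    intro Z k; rw [← Category.assoc, h2, zero_comp]
  have h3' : ∀ {Z : C} (k : XX ⟶ Z), J ≫ pi0 ≫ k = 0 := by
    intro Z k; rw [← Category.assoc, h3, zero_comp]
  have h4' : ∀ {Z : C} (k : GG ⟶ Z), J ≫ P ≫ k = k := by
    intro Z k; rw [← Category.assoc, h4, Category.id_comp]
  set S : GG ⟶ GG := Dm - c1 ≫ inv u ≫ b1 with hSdef
  set Δ : FF ⟶ FF := pi0 ≫ u ≫ io + pi0 ≫ b1 ≫ J + P ≫ c1 ≫ io + P ≫ Dm ≫ J with hD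
  set L : FF ⟶ FF := 𝟙 FF - P ≫ c1 ≫ inv u ≫ io with hL
  set Linv : FF ⟶ FF := 𝟙 FF + P ≫ c1 ≫ inv u ≫ io with hLinv
  set R : FF ⟶ FF := 𝟙 FF - pi0 ≫ inv u ≫ b1 ≫ J with hR
  set Rinv : FF ⟶ FF := 𝟙 FF + pi0 ≫ inv u ≫ b1 ≫ J with hRinv
  set G : FF ⟶ FF := pi0 ≫ u ≫ io + P ≫ S ≫ J with hG
  have hLL : Linv ≫ L = 𝟙 FF := by
    simp only [hL, hLinv, Preadditive.comp_sub, Preadditive.add_comp, Preadditive.comp_add,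
      Preadditive.sub_comp, Category.id_comp, Category.comp_id, Category.assoc, h2', comp_zero]
    abel
  have hLL' : L ≫ Linv = 𝟙 FF := by
    simp only [hL, hLinv, Preadditive.comp_sub, Preadditive.add_comp, Preadditive.comp_add,
      Preadditive.sub_comp, Category.id_comp, Category.comp_id, Category.assoc, h2', comp_zero]
    abel
  have hRR : R ≫ Rinv = 𝟙 FF := by
    simp only [hR, hRinv, Preadditive.comp_sub, Preadditive.add_comp, Preadditive.comp_add,
      Preadditive.sub_comp, Category.id_comp, Category.comp_id, Category.assoc, h3', comp_zero]
    abel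
  have hRR' : Rinv ≫ R = 𝟙 FF := by
    simp only [hR, hRinv, Preadditive.comp_sub, Preadditive.add_comp, Preadditive.comp_add,
      Preadditive.sub_comp, Category.id_comp, Category.comp_id, Category.assoc, h3', comp_zero]
    abel
  have key : L ≫ Δ ≫ R = G := by
    simp only [hL, hR, hD, hG, hSdef, Preadditive.comp_sub, Preadditive.add_comp,
      Preadditive.comp_add, Preadditive.sub_comp, Category.id_comp, Category.comp_id,
      Category.assoc, h1', h2', h3', h4', comp_zero, zero_comp, add_zero, zero_add,
      Preadditive.comp_neg, Preadditive.neg_comp, IsIso.hom_inv_id_assoc, IsIso.inv_hom_id_assoc]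
    abel
  have hGiso : IsIso G := by
    refine ⟨pi0 ≫ inv u ≫ io + P ≫ inv S ≫ J, ?_, ?_⟩
    · simp only [hG, Preadditive.comp_add, Preadditive.add_comp, Category.assoc,
        h1', h2', h3', h4', comp_zero, zero_comp, add_zero, zero_add,
        IsIso.hom_inv_id_assoc, IsIso.inv_hom_id_assoc]
      exact h5
    · simp only [hG, Preadditive.comp_add, Preadditive.add_comp, Category.assoc,
        h1', h2', h3', h4', comp_zero, zero_comp, add_zero, zero_add,
        IsIso.hom_inv_id_assoc, IsIso.inv_hom_id_assoc]
      exact h5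
  have : Δ = Linv ≫ G ≫ Rinv := by
    rw [← key]
    calc Δ = (Linv ≫ L) ≫ Δ ≫ (R ≫ Rinv) := by rw [hLL, hRR]; simp
      _ = Linv ≫ (L ≫ Δ ≫ R) ≫ Rinv := by simp only [Category.assoc]
  rw [this]
  haveI : IsIso Linv := ⟨L, hLL, hLL'⟩
  haveI : IsIso Rinv := ⟨R, hRR', hRR⟩
  infer_instance

lemma rad_isIso : ∀ (n : ℕ) (f : Fin n → C) (_ : ∀ i, IsLocalRing (End (f i)))
    (ζ : ⨁ f ⟶ ⨁ f) (_ : ∀ i j, ¬ IsIso (biproduct.ι f i ≫ ζ ≫ biproduct.π f j)),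
    IsIso (𝟙 (⨁ f) - ζ) := by
  intro n
  induction n with
  | zero =>
    intro f hloc ζ hc
    have hz : ζ = 0 := biproduct.hom_ext _ _ (fun j => j.elim0)
    rw [hz, sub_zero]
    infer_instance
  | succ n IH =>
    intro f hloc ζ hc
    set g : Fin n → C := fun m => f m.succ with hg
    set pi0 : ⨁ f ⟶ f 0 := biproduct.π f 0 with hpi0
    set io : f 0 ⟶ ⨁ f := biproduct.ι f 0 with hio
    set P : ⨁ f ⟶ ⨁ g := biproduct.lift (fun m => biproduct.π f m.succ) with hP
    set J : ⨁ g ⟶ ⨁ f := biproduct.desc (fun m => biproduct.ι f m.succ) with hJ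
    have i1 : io ≫ pi0 = 𝟙 (f 0) := biproduct.ι_π_self f 0
    have i2 : io ≫ P = 0 := by
      apply biproduct.hom_ext
      intro m
      simp only [hP, hio, Category.assoc, biproduct.lift_π, zero_comp]
      exact biproduct.ι_π_ne f (Fin.succ_ne_zero m).symm
    have i3 : J ≫ pi0 = 0 := by
      apply biproduct.hom_ext'
      intro m
      simp only [hJ, hpi0, biproduct.ι_desc_assoc, comp_zero]
      exact biproduct.ι_π_ne f (Fin.succ_ne_zero m)
    have i4 : J ≫ P = 𝟙 (⨁ g) := by
      apply biproduct.hom_ext'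
      intro m
      apply biproduct.hom_ext
      intro m'
      simp only [hJ, hP, biproduct.ι_desc_assoc, Category.assoc, biproduct.lift_π,
        Category.id_comp, Category.comp_id]
      by_cases h : m = m'
      · subst h
        simp [hg]
        rfl
      · rw [biproduct.ι_π_ne f (fun hh => h (Fin.succ_injective n hh)),
          biproduct.ι_π_ne g h]
    have i5 : pi0 ≫ io + P ≫ J = 𝟙 (⨁ f) := by
      rw [hP, hJ, biproduct.lift_desc, ← biproduct.total (f := f), Fin.sum_univ_succ]
    set Δ : ⨁ f ⟶ ⨁ f := 𝟙 (⨁ f) - ζ with hΔ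
    -- the corner entry is invertible
    have hnu : ¬ IsUnit (toEnd (io ≫ ζ ≫ pi0)) := fun hu => hc 0 0 (isIso_of_isUnit _ hu)
    have hu1 : IsUnit ((1 : End (f 0)) - toEnd (io ≫ ζ ≫ pi0)) := local_one_sub _ hnu
    have hupiso : IsIso (𝟙 (f 0) - io ≫ ζ ≫ pi0) := isIso_of_isUnit _ hu1
    have hucomp : io ≫ Δ ≫ pi0 = 𝟙 (f 0) - io ≫ ζ ≫ pi0 := by
      rw [hΔ, Preadditive.sub_comp, Preadditive.comp_sub, Category.id_comp, ← Category.assoc, i1]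
    haveI hui : IsIso (io ≫ Δ ≫ pi0) := by rw [hucomp]; exact hupiso
    -- apply induction hypothesis to the Schur complement
    have hloc' : ∀ m, IsLocalRing (End (g m)) := fun m => hloc m.succ
    set Sc : ⨁ g ⟶ ⨁ g :=
      (J ≫ Δ ≫ P) - (J ≫ Δ ≫ pi0) ≫ inv (io ≫ Δ ≫ pi0) ≫ (io ≫ Δ ≫ P) with hSc
    have hSiso : IsIso Sc := by
      have hζ' := IH g hloc' (𝟙 (⨁ g) - Sc) ?_
      · rwa [sub_sub_cancel] at hζ'
      · intro m m'
        haveI := hloc m.succ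
        haveI := hloc m'.succ
        haveI := hloc 0
        have hcancel : biproduct.ι g m ≫ biproduct.π g m'
            = (biproduct.ι f m.succ ≫ biproduct.π f m'.succ : g m ⟶ g m') := by
          by_cases h : m = m'
          · subst h
            rw [biproduct.ι_π_self, biproduct.ι_π_self]
          · rw [biproduct.ι_π_ne g h,
              biproduct.ι_π_ne f (fun hh => h (Fin.succ_injective n hh))]
        have hcomp1 : biproduct.ι g m ≫ (J ≫ Δ ≫ P) ≫ biproduct.π g m'
            = biproduct.ι g m ≫ biproduct.π g m' - biproduct.ι f m.succ ≫ ζ ≫ biproduct.π f m'.succ := by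
          rw [hΔ]
          simp only [hJ, hP, biproduct.ι_desc_assoc, Category.assoc, biproduct.lift_π,
            Preadditive.sub_comp, Preadditive.comp_sub, Category.id_comp]
          rw [hcancel]
        have hc1 : biproduct.ι g m ≫ (J ≫ Δ ≫ pi0)
            = -(biproduct.ι f m.succ ≫ ζ ≫ pi0) := by
          rw [hΔ]
          simp only [hJ, biproduct.ι_desc_assoc, Preadditive.sub_comp, Preadditive.comp_sub,
            Category.id_comp]
          rw [show biproduct.ι f m.succ ≫ pi0 = 0 from biproduct.ι_π_ne f (Fin.succ_ne_zero m),
            zero_sub]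
        have hexp : biproduct.ι g m ≫ (𝟙 (⨁ g) - Sc) ≫ biproduct.π g m'
            = biproduct.ι f m.succ ≫ ζ ≫ biproduct.π f m'.succ
              + (biproduct.ι g m ≫ (J ≫ Δ ≫ pi0))
                ≫ inv (io ≫ Δ ≫ pi0) ≫ (io ≫ Δ ≫ P) ≫ biproduct.π g m' := by
          simp only [hSc, hΔ, hJ, hP, biproduct.ι_desc_assoc, biproduct.lift_π,
            Preadditive.sub_comp, Preadditive.comp_sub, Category.id_comp, Category.comp_id,
            Category.assoc, hcancel]
          abel
        rw [hexp]
        refine notIso_add _ _ (hc m.succ m'.succ) ?_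
        refine notIso_comp_left _ ?_ _
        rw [hc1]
        exact notIso_neg _ (hc m.succ 0)
    have hexp2 : Δ = pi0 ≫ (io ≫ Δ ≫ pi0) ≫ io + pi0 ≫ (io ≫ Δ ≫ P) ≫ J
        + P ≫ (J ≫ Δ ≫ pi0) ≫ io + P ≫ (J ≫ Δ ≫ P) ≫ J := by
      calc Δ = (pi0 ≫ io + P ≫ J) ≫ Δ ≫ (pi0 ≫ io + P ≫ J) := by
            rw [i5, Category.id_comp, Category.comp_id]
        _ = _ := by
            simp only [Preadditive.add_comp, Preadditive.comp_add, Category.assoc]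
            abel
    rw [hexp2]
    exact elim2 pi0 io P J i1 i2 i3 i4 i5 _ _ _ _ hSiso

end Matrix

section ECalc

variable (𝒞 : ECat C)

lemma Epf_zero {X A A' : C} (a : A ⟶ A') : (𝒞.E.obj (op X)).map a (0 : (𝒞.E.obj (op X)).obj A) = 0 :=
  map_zero _

lemma Epb_zero {X' X A : C} (c : X' ⟶ X) : (𝒞.E.map c.op).app A (0 : (𝒞.E.obj (op X)).obj A) = 0 :=
  map_zero _

lemma Epf_id {X A : C} (δ : (𝒞.E.obj (op X)).obj A) : (𝒞.E.obj (op X)).map (𝟙 A) δ = δ := by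
  rw [CategoryTheory.Functor.map_id]
  rfl

lemma Epb_id {X A : C} (δ : (𝒞.E.obj (op X)).obj A) : (𝒞.E.map (𝟙 X).op).app A δ = δ := by
  rw [show (𝟙 X).op = 𝟙 (op X) from rfl, CategoryTheory.Functor.map_id]
  rfl

lemma Epf_comp {X A A' A'' : C} (a : A ⟶ A') (a' : A' ⟶ A'') (δ : (𝒞.E.obj (op X)).obj A) :
    (𝒞.E.obj (op X)).map (a ≫ a') δ = (𝒞.E.obj (op X)).map a' ((𝒞.E.obj (op X)).map a δ) := by
  rw [Functor.map_comp]
  rfl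

lemma Epb_comp {X'' X' X A : C} (c : X'' ⟶ X') (c' : X' ⟶ X) (δ : (𝒞.E.obj (op X)).obj A) :
    (𝒞.E.map (c ≫ c').op).app A δ = (𝒞.E.map c.op).app A ((𝒞.E.map c'.op).app A δ) := by
  rw [show (c ≫ c').op = c'.op ≫ c.op from rfl, Functor.map_comp]
  rfl

lemma Epb_pf {X' X A A' : C} (c : X' ⟶ X) (a : A ⟶ A') (δ : (𝒞.E.obj (op X)).obj A) :
    (𝒞.E.map c.op).app A' ((𝒞.E.obj (op X)).map a δ)
      = (𝒞.E.obj (op X')).map a ((𝒞.E.map c.op).app A δ) := by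
  exact ConcreteCategory.congr_hom ((𝒞.E.map c.op).naturality a) δ

lemma Epf_sub {X A A' : C} (a b : A ⟶ A') (δ : (𝒞.E.obj (op X)).obj A) :
    (𝒞.E.obj (op X)).map (a - b) δ
      = (𝒞.E.obj (op X)).map a δ - (𝒞.E.obj (op X)).map b δ := by
  haveI := 𝒞.E_additive_right (op X)
  rw [Functor.map_sub]
  rfl

end ECalc

section Conflation

variable (𝒞 : ECat C)

/-- if the pullback of `δ` along `h` vanishes, `h` factors through the deflation -/
lemma factor_thru_deflation {A B X T' : C} {f : A ⟶ B} {g : B ⟶ X}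
    {δ : (𝒞.E.obj (op X)).obj A} (hconf : 𝒞.IsConf f g δ) (h : T' ⟶ X)
    (hδ : (𝒞.E.map h.op).app A δ = 0) : ∃ k : T' ⟶ B, k ≫ g = h := by
  obtain ⟨b, hb1, hb2⟩ := 𝒞.real_map (𝟙 A) h (𝒞.real_zero A T') hconf
    (by rw [Epf_id, hδ])
  refine ⟨biprod.inr ≫ b, ?_⟩
  rw [Category.assoc, hb2, ← Category.assoc, biprod.inr_snd, Category.id_comp]

/-- if the pushforward of `δ` along `q` vanishes, `q` extends along the inflation -/
lemma extend_thru_inflation {A B X W : C} {f : A ⟶ B} {g : B ⟶ X}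
    {δ : (𝒞.E.obj (op X)).obj A} (hconf : 𝒞.IsConf f g δ) (q : A ⟶ W)
    (hδ : (𝒞.E.obj (op X)).map q δ = 0) : ∃ r : B ⟶ W, f ≫ r = q := by
  obtain ⟨b, hb1, hb2⟩ := 𝒞.real_map q (𝟙 X) hconf (𝒞.real_zero W X)
    (by rw [hδ, Epb_id])
  refine ⟨b ≫ biprod.fst, ?_⟩
  rw [← Category.assoc, hb1, Category.assoc, biprod.inl_fst, Category.comp_id]

/-- pulling back a conflation class along its own deflation gives zero -/
lemma pb_own_deflation {A B X : C} {f : A ⟶ B} {g : B ⟶ X}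
    {δ : (𝒞.E.obj (op X)).obj A} (hconf : 𝒞.IsConf f g δ) :
    (𝒞.E.map g.op).app A δ = 0 := by
  obtain ⟨c, hc1, hc2⟩ := 𝒞.et3 (𝟙 A) (biprod.desc f (𝟙 B)) (𝒞.real_zero A B) hconf
    (by rw [biprod.inl_desc, Category.id_comp])
  have hcg : c = g := by
    have h3 := congrArg (fun t => biprod.inr ≫ t) hc1
    simpa using h3
  rw [← hcg, ← hc2, Epf_zero]

/-- pushing forward a conflation class along its own inflation gives zero -/
lemma pf_own_inflation {A B X : C} {f : A ⟶ B} {g : B ⟶ X}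
    {δ : (𝒞.E.obj (op X)).obj A} (hconf : 𝒞.IsConf f g δ) :
    (𝒞.E.obj (op X)).map f δ = 0 := by
  obtain ⟨a, ha1, ha2⟩ := 𝒞.et3op (biprod.lift (𝟙 B) g) (𝟙 X) hconf (𝒞.real_zero B X)
    (by rw [biprod.lift_snd, Category.comp_id])
  have haf : a = f := by
    have h3 := congrArg (fun t => t ≫ biprod.fst) ha1
    simpa using h3.symm
  rw [← haf, ha2, Epb_zero]

/-- exactness of `E(X,-) ⟶ E(B,-) ⟶ E(A,-)` at the middle term -/
lemma exact_first_var {A B X T' : C} {f : A ⟶ B} {g : B ⟶ X}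
    {δ : (𝒞.E.obj (op X)).obj A} (hconf : 𝒞.IsConf f g δ)
    (ε : (𝒞.E.obj (op B)).obj T')
    (hε : (𝒞.E.map f.op).app T' ε = 0) :
    ∃ ρ : (𝒞.E.obj (op X)).obj T', ε = (𝒞.E.map g.op).app T' ρ := by
  obtain ⟨M, t, e, hconfε⟩ := 𝒞.real_exists ε
  obtain ⟨Ee, d, e₂, h', δ'', hco1, hco2, hd1, hd2, hd3, hd4⟩ := 𝒞.et4op hconfε hconf
  rw [hε] at hco2
  obtain ⟨biso, hb1, hb2⟩ := 𝒞.real_unique hco2 (𝒞.real_zero T' A)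
  have hdr : d ≫ (biso.hom ≫ biprod.fst) = 𝟙 T' := by
    rw [← Category.assoc, hb1, biprod.inl_fst]
  refine ⟨(𝒞.E.obj (op X)).map (biso.hom ≫ biprod.fst) δ'', ?_⟩
  rw [Epb_pf, ← hd4, ← Epf_comp, hdr, Epf_id]

end Conflation

section MinApprox

lemma split_off_iso {m : ℕ} (f : Fin (m+1) → C) (i : Fin (m+1)) :
    (biprod.desc (biproduct.ι f i)
        (biproduct.desc (fun t => biproduct.ι f (i.succAbove t))) ≫
      biprod.lift (biproduct.π f i)
        (biproduct.lift (fun t => biproduct.π f (i.succAbove t))) = 𝟙 _) ∧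
    (biprod.lift (biproduct.π f i)
        (biproduct.lift (fun t => biproduct.π f (i.succAbove t))) ≫
      biprod.desc (biproduct.ι f i)
        (biproduct.desc (fun t => biproduct.ι f (i.succAbove t))) = 𝟙 (⨁ f)) := by
  constructor
  · apply biprod.hom_ext'
    · apply biprod.hom_ext
      · simp
      · apply biproduct.hom_ext
        intro t
        simp [biproduct.ι_π_ne f (Fin.succAbove_ne i t).symm]
    · apply biprod.hom_ext
      · apply biproduct.hom_ext'
        intro t
        simp [biproduct.ι_π_ne f (Fin.succAbove_ne i t)]
      · apply biproduct.hom_ext'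
        intro t
        apply biproduct.hom_ext
        intro t'
        simp only [biprod.inr_desc_assoc, biproduct.ι_desc_assoc, Category.assoc,
          biprod.lift_snd, biproduct.lift_π, biprod.inr_snd, Category.comp_id, Category.id_comp]
        by_cases h : t = t'
        · subst h
          rw [biproduct.ι_π_self, biproduct.ι_π_self]
        · rw [biproduct.ι_π_ne f (fun hh => h (Fin.succAbove_right_injective hh)),
            biproduct.ι_π_ne _ h]
  · rw [biprod.lift_desc, biproduct.lift_desc, ← biproduct.total,
      Fin.sum_univ_succAbove (fun k => biproduct.π f k ≫ biproduct.ι f k) i]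

lemma min_approx_core (𝒳 : Set C) (hiso : ClosedIso 𝒳) (hsum : ClosedSummands 𝒳) (K : C) :
    ∀ n (f : Fin n → C) (a : K ⟶ ⨁ f), (∀ i, IsLocalRing (End (f i))) →
      IsLeftApprox 𝒳 a →
      ∃ (X₀ : C) (a' : K ⟶ X₀), IsLeftApprox 𝒳 a' ∧ ∀ ω : X₀ ⟶ X₀, a' ≫ ω = a' → IsIso ω := by
  intro n
  induction n using Nat.strong_induction_on with
  | _ n IH =>
    intro f a hloc happ
    by_cases hmin : ∀ ω : (⨁ f) ⟶ (⨁ f), a ≫ ω = a → IsIso ω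
    · exact ⟨⨁ f, a, happ, hmin⟩
    · push_neg at hmin
      obtain ⟨ω, hω, hni⟩ := hmin
      have ha0 : a ≫ (𝟙 (⨁ f) - ω) = 0 := by
        rw [Preadditive.comp_sub, Category.comp_id, hω, sub_self]
      by_cases hcase : ∃ i j, IsIso (biproduct.ι f i ≫ (𝟙 (⨁ f) - ω) ≫ biproduct.π f j)
      · obtain ⟨i, j, hij⟩ := hcase
        obtain _ | m := n
        · exact i.elim0
        -- descent: remove the summand `i`
        have htotal : ∀ (W : C) (k : ⨁ f ⟶ W),
            a ≫ k = ∑ k', (a ≫ biproduct.π f k') ≫ (biproduct.ι f k' ≫ k) := by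
          intro W k
          conv_lhs => rw [← Category.id_comp k, ← biproduct.total]
          rw [Preadditive.sum_comp, Preadditive.comp_sum]
          exact Finset.sum_congr rfl (fun k' _ => by rw [Category.assoc, Category.assoc])
        have hsum0 : ∑ k', (a ≫ biproduct.π f k')
            ≫ (biproduct.ι f k' ≫ (𝟙 (⨁ f) - ω) ≫ biproduct.π f j) = 0 := by
          have h1 : a ≫ ((𝟙 (⨁ f) - ω) ≫ biproduct.π f j) = 0 := by
            rw [← Category.assoc, ha0, zero_comp]
          rw [htotal _ ((𝟙 (⨁ f) - ω) ≫ biproduct.π f j)] at h1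
          exact h1
        have hai : (a ≫ biproduct.π f i) ≫ (biproduct.ι f i ≫ (𝟙 (⨁ f) - ω) ≫ biproduct.π f j)
            = -∑ t, (a ≫ biproduct.π f (i.succAbove t))
              ≫ (biproduct.ι f (i.succAbove t) ≫ (𝟙 (⨁ f) - ω) ≫ biproduct.π f j) := by
          rw [Fin.sum_univ_succAbove (fun k' => (a ≫ biproduct.π f k')
            ≫ (biproduct.ι f k' ≫ (𝟙 (⨁ f) - ω) ≫ biproduct.π f j)) i] at hsum0
          exact eq_neg_of_add_eq_zero_left hsum0
        -- the new approximation
        have hmem : (⨁ fun t => f (i.succAbove t)) ∈ 𝒳 := by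
          have h2 := (split_off_iso f i).2
          have h1 := (split_off_iso f i).1
          exact (hsum _ _ (hiso _ _ ⟨biprod.lift (biproduct.π f i)
            (biproduct.lift fun t => biproduct.π f (i.succAbove t)),
            biprod.desc (biproduct.ι f i)
            (biproduct.desc fun t => biproduct.ι f (i.succAbove t)), h2, h1⟩ happ.1)).2
        refine IH m (Nat.lt_succ_self m) (fun t => f (i.succAbove t))
          (a ≫ biproduct.lift (fun t => biproduct.π f (i.succAbove t)))
          (fun t => hloc _) ⟨hmem, ?_⟩
        intro T' hT' h
        obtain ⟨k, hk⟩ := happ.2 T' hT' h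
        refine ⟨biproduct.desc (fun t => biproduct.ι f (i.succAbove t) ≫ k
          - (biproduct.ι f (i.succAbove t) ≫ (𝟙 (⨁ f) - ω) ≫ biproduct.π f j)
            ≫ CategoryTheory.inv (biproduct.ι f i ≫ (𝟙 (⨁ f) - ω) ≫ biproduct.π f j)
            ≫ (biproduct.ι f i ≫ k)), ?_⟩
        rw [Category.assoc, biproduct.lift_desc, Preadditive.comp_sum]
        have hterm : ∀ t, a ≫ (biproduct.π f (i.succAbove t) ≫ (biproduct.ι f (i.succAbove t) ≫ k
            - (biproduct.ι f (i.succAbove t) ≫ (𝟙 (⨁ f) - ω) ≫ biproduct.π f j)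
              ≫ CategoryTheory.inv (biproduct.ι f i ≫ (𝟙 (⨁ f) - ω) ≫ biproduct.π f j)
              ≫ (biproduct.ι f i ≫ k)))
            = (a ≫ biproduct.π f (i.succAbove t)) ≫ (biproduct.ι f (i.succAbove t) ≫ k)
              - ((a ≫ biproduct.π f (i.succAbove t))
                  ≫ (biproduct.ι f (i.succAbove t) ≫ (𝟙 (⨁ f) - ω) ≫ biproduct.π f j))
                ≫ (CategoryTheory.inv (biproduct.ι f i ≫ (𝟙 (⨁ f) - ω) ≫ biproduct.π f j)
                  ≫ (biproduct.ι f i ≫ k)) := by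
          intro t
          simp only [Preadditive.comp_sub, Category.assoc]
        rw [Finset.sum_congr rfl (fun t _ => hterm t), Finset.sum_sub_distrib,
          ← Preadditive.sum_comp]
        have hai2 : ∑ t, (a ≫ biproduct.π f (i.succAbove t))
            ≫ (biproduct.ι f (i.succAbove t) ≫ (𝟙 (⨁ f) - ω) ≫ biproduct.π f j)
            = -((a ≫ biproduct.π f i)
                ≫ (biproduct.ι f i ≫ (𝟙 (⨁ f) - ω) ≫ biproduct.π f j)) := by
          rw [hai, neg_neg]
        rw [hai2, Preadditive.neg_comp, sub_neg_eq_add]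
        have hmid : ((a ≫ biproduct.π f i)
              ≫ (biproduct.ι f i ≫ (𝟙 (⨁ f) - ω) ≫ biproduct.π f j))
            ≫ (CategoryTheory.inv (biproduct.ι f i ≫ (𝟙 (⨁ f) - ω) ≫ biproduct.π f j)
              ≫ (biproduct.ι f i ≫ k))
            = (a ≫ biproduct.π f i) ≫ (biproduct.ι f i ≫ k) := by
          rw [Category.assoc, IsIso.hom_inv_id_assoc]
        rw [hmid]
        have hfirst : ∑ t, (a ≫ biproduct.π f (i.succAbove t))
            ≫ (biproduct.ι f (i.succAbove t) ≫ k)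
            = a ≫ k - (a ≫ biproduct.π f i) ≫ (biproduct.ι f i ≫ k) := by
          rw [htotal _ k, Fin.sum_univ_succAbove (fun k' => (a ≫ biproduct.π f k')
            ≫ (biproduct.ι f k' ≫ k)) i]
          abel
        rw [hfirst, hk]
        abel
      · push_neg at hcase
        have hr := rad_isIso _ f hloc (𝟙 (⨁ f) - ω) hcase
        rw [sub_sub_cancel] at hr
        exact absurd hr hni

lemma exists_min_approx (hKS : IsKrullSchmidt C) (𝒳 : Set C) (hiso : ClosedIso 𝒳)
    (hcov : CovariantlyFinite 𝒳) (hsum : ClosedSummands 𝒳) (K : C) :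
    ∃ (X₀ : C) (a : K ⟶ X₀), IsLeftApprox 𝒳 a ∧ ∀ ω : X₀ ⟶ X₀, a ≫ ω = a → IsIso ω := by
  obtain ⟨Y, g0, hg0⟩ := hcov K
  obtain ⟨n, f, hloc, ⟨φ⟩⟩ := hKS Y
  refine min_approx_core 𝒳 hiso hsum K n f (g0 ≫ φ.hom) hloc
    ⟨hiso Y (⨁ f) φ hg0.1, ?_⟩
  intro T' hT' h
  obtain ⟨k, hk⟩ := hg0.2 T' hT' h
  exact ⟨φ.inv ≫ k, by rw [Category.assoc, Iso.hom_inv_id_assoc, hk]⟩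

end MinApprox


section Main

lemma right_approx (hKS : IsKrullSchmidt C) (𝒞 : ECat C) (𝒳 : Set C)
    (hiso : ClosedIso 𝒳) (hcov : CovariantlyFinite 𝒳)
    (hext : 𝒞.ClosedExt 𝒳) (hsum : ClosedSummands 𝒳) (A : C) :
    ∃ (T : C) (g : T ⟶ A), IsRightApprox (𝒞.lperp1 𝒳) g := by
  obtain ⟨X₀, a, happ, hminimal⟩ := exists_min_approx hKS 𝒳 hiso hcov hsum (𝒞.Ω A)
  obtain ⟨T, f, g, hconf⟩ := 𝒞.real_exists ((𝒞.E.obj (op A)).map a (𝒞.δP A))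
  refine ⟨T, g, ?_, ?_⟩
  · -- `T ∈ лperp1 𝒳`
    intro Xx hXx ε
    obtain ⟨M, mm, e, hconfε⟩ := 𝒞.real_exists ε
    obtain ⟨Ee, d, e₁, h', δ'', hco1, hco2, hd1, hd2, hd3, hd4⟩ := 𝒞.et4op hconfε hconf
    have hEe : Ee ∈ 𝒳 := hext Xx Ee X₀ ⟨d, e₁, _, hco2⟩ hXx happ.1
    obtain ⟨p, hp⟩ := factor_thru_deflation 𝒞 hco1 (𝒞.πP A) (𝒞.P_projective A Ee _)
    obtain ⟨w, hw1, hw2⟩ := 𝒞.et3op p (𝟙 A) (𝒞.confP A) hco1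
      (by rw [Category.comp_id]; exact hp.symm)
    rw [Epb_id] at hw2
    have hq : (𝒞.E.obj (op A)).map (w ≫ e₁ - a) (𝒞.δP A) = 0 := by
      rw [Epf_sub, Epf_comp, hw2, hd3, sub_self]
    obtain ⟨r', hr'⟩ := extend_thru_inflation 𝒞 (𝒞.confP A) (w ≫ e₁ - a) hq
    obtain ⟨kk, hkk⟩ := factor_thru_deflation 𝒞 hco2 r' (𝒞.P_projective A Xx _)
    have hw'e : (w - 𝒞.ιP A ≫ kk) ≫ e₁ = a := by
      rw [Preadditive.sub_comp, Category.assoc, hkk, hr', sub_sub_cancel]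
    have hw'δ : (𝒞.E.obj (op A)).map (w - 𝒞.ιP A ≫ kk) (𝒞.δP A) = δ'' := by
      rw [Epf_sub, hw2, Epf_comp, pf_own_inflation 𝒞 (𝒞.confP A), Epf_zero, sub_zero]
    obtain ⟨s, hs⟩ := happ.2 Ee hEe (w - 𝒞.ιP A ≫ kk)
    have hω : a ≫ (s ≫ e₁) = a := by rw [← Category.assoc, hs, hw'e]
    haveI hωiso : IsIso (s ≫ e₁) := hminimal _ hω
    have hσ : (CategoryTheory.inv (s ≫ e₁) ≫ s) ≫ e₁ = 𝟙 X₀ := by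
      rw [Category.assoc, IsIso.inv_hom_id]
    have hη : (𝒞.E.map f.op).app Xx ε = 0 := by
      have h0 : (𝒞.E.map e₁.op).app Xx ((𝒞.E.map f.op).app Xx ε) = 0 :=
        pb_own_deflation 𝒞 hco2
      calc (𝒞.E.map f.op).app Xx ε
          = (𝒞.E.map (𝟙 X₀).op).app Xx ((𝒞.E.map f.op).app Xx ε) := (Epb_id 𝒞 _).symm
        _ = (𝒞.E.map ((CategoryTheory.inv (s ≫ e₁) ≫ s) ≫ e₁).op).app Xx
            ((𝒞.E.map f.op).app Xx ε) := by rw [hσ]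
        _ = (𝒞.E.map (CategoryTheory.inv (s ≫ e₁) ≫ s).op).app Xx
            ((𝒞.E.map e₁.op).app Xx ((𝒞.E.map f.op).app Xx ε)) := Epb_comp 𝒞 _ _ _
        _ = 0 := by rw [h0, Epb_zero]
    obtain ⟨ρ, hρ⟩ := exact_first_var 𝒞 hconf ε hη
    obtain ⟨N, u, vv, hconfρ⟩ := 𝒞.real_exists ρ
    obtain ⟨p₂, hp₂⟩ := factor_thru_deflation 𝒞 hconfρ (𝒞.πP A) (𝒞.P_projective A Xx _)
    obtain ⟨hh, hh1, hh2⟩ := 𝒞.et3op p₂ (𝟙 A) (𝒞.confP A) hconfρ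
      (by rw [Category.comp_id]; exact hp₂.symm)
    rw [Epb_id] at hh2
    obtain ⟨k₂, hk₂⟩ := happ.2 Xx hXx hh
    rw [hρ, ← hh2, ← hk₂, Epf_comp, Epb_pf, pb_own_deflation 𝒞 hconf, Epf_zero]
    rfl
  · -- right approximation property
    intro T' hT' h
    exact factor_thru_deflation 𝒞 hconf h (hT' X₀ happ.1 _)

end Main

theorem stmt1 (hKS : IsKrullSchmidt C) (𝒞 : ECat C) (𝒳 : Set C)
    (hiso : ClosedIso 𝒳) (hcov : CovariantlyFinite 𝒳)
    (hext : 𝒞.ClosedExt 𝒳) (hsum : ClosedSummands 𝒳) :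
    ContravariantlyFinite (𝒞.lperp1 𝒳) ∧ 𝒞.ClosedExt (𝒞.lperp1 𝒳) ∧
      ClosedSummands (𝒞.lperp1 𝒳) := by
  refine ⟨?_, ?_, ?_⟩
  · intro A
    exact right_approx hKS 𝒞 𝒳 hiso hcov hext hsum A
  · intro A B Xc hTri hA hXc
    obtain ⟨f, g, δ, hconf⟩ := hTri
    intro T hT ε
    obtain ⟨ρ, hρ⟩ := exact_first_var 𝒞 hconf ε (hA T hT _)
    rw [hρ, hXc T hT ρ]; exact Epb_zero 𝒞 g
  · intro A B hAB
    constructor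
    · intro T hT δ
      have h1 := hAB T hT ((𝒞.E.map (biprod.fst : A ⊞ B ⟶ A).op).app T δ)
      calc (id δ : (𝒞.E.obj (op A)).obj T) = (𝒞.E.map (𝟙 A).op).app T δ := (Epb_id 𝒞 δ).symm
        _ = (𝒞.E.map ((biprod.inl : A ⟶ A ⊞ B) ≫ biprod.fst).op).app T δ := by
            rw [biprod.inl_fst]
        _ = (𝒞.E.map (biprod.inl : A ⟶ A ⊞ B).op).app T
            ((𝒞.E.map (biprod.fst : A ⊞ B ⟶ A).op).app T δ) := Epb_comp 𝒞 _ _ _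
        _ = 0 := by rw [h1]; exact Epb_zero 𝒞 _
    · intro T hT δ
      have h1 := hAB T hT ((𝒞.E.map (biprod.snd : A ⊞ B ⟶ B).op).app T δ)
      calc (id δ : (𝒞.E.obj (op B)).obj T) = (𝒞.E.map (𝟙 B).op).app T δ := (Epb_id 𝒞 δ).symm
        _ = (𝒞.E.map ((biprod.inr : B ⟶ A ⊞ B) ≫ biprod.snd).op).app T δ := by
            rw [biprod.inr_snd]
        _ = (𝒞.E.map (biprod.inr : B ⟶ A ⊞ B).op).app T
            ((𝒞.E.map (biprod.snd : A ⊞ B ⟶ B).op).app T δ) := Epb_comp 𝒞 _ _ _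
        _ = 0 := by rw [h1]; exact Epb_zero 𝒞 _

end ExtTilting
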